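/- For n ≥ 5, the Chermak-Delgado lattice of the symmetric group Sₙ is {1, Sₙ}. -/

import Mathlib

open Equiv Subgroup

private def Ffn : ℕ → ℕ
  | 0 => 1
  | 1 => 1
  | 2 => 4
  | 3 => 9
  | 4 => 32
  | (n+5) => (n+5).factorial

private lemma Ffn_eq {n : ℕ} (h : 5 ≤ n) : Ffn n = n.factorial := by
  obtain ⟨t, rfl⟩ : ∃ t, n = t + 5 := ⟨n - 5, by omega⟩
  rfl

private lemma fact_le_Ffn (n : ℕ) : n.factorial ≤ Ffn n := by
  match n with
  | 0 => decide
  | 1 => decide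
  | 2 => decide
  | 3 => decide
  | 4 => decide
  | (n+5) => exact le_refl _

private lemma fact4_expand (t : ℕ) :
    (t+4).factorial = (t+4)*(t+3)*(t+2)*(t+1)*t.factorial := by
  simp [Nat.factorial_succ]; ring

private lemma fact5_expand (t : ℕ) :
    (t+5).factorial = (t+5)*(t+4)*(t+3)*(t+2)*(t+1)*t.factorial := by
  simp [Nat.factorial_succ]; ring

private lemma fact_step (s j : ℕ) (hj : 5 ≤ j) :
    (s+2) * j.factorial < (s + j + 1).factorial := by
  induction s with
  | zero =>
    have : (j+1).factorial = (j+1) * j.factorial := Nat.factorial_succ j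
    have h2 : 2 < j + 1 := by omega
    have h3 := Nat.mul_lt_mul_of_lt_of_le h2 (le_refl j.factorial) (Nat.factorial_pos j)
    calc (0+2) * j.factorial = 2 * j.factorial := by ring
      _ < (j+1) * j.factorial := h3
      _ = (0 + j + 1).factorial := by
          rw [show (0:ℕ) + j + 1 = j + 1 by ring, Nat.factorial_succ]
  | succ s ih =>
    have h1 : (s + 3) * j.factorial ≤ (s + j + 2) * ((s+2) * j.factorial) := by
      have : s + 3 ≤ (s + j + 2) * (s + 2) := by nlinarith
      calc (s+3) * j.factorial ≤ ((s+j+2)*(s+2)) * j.factorial :=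
            Nat.mul_le_mul_right _ this
        _ = (s+j+2) * ((s+2)*j.factorial) := by ring
    have h2 : (s + j + 2) * ((s+2) * j.factorial) < (s + j + 2) * (s + j + 1).factorial :=
      Nat.mul_lt_mul_of_le_of_lt (le_refl _) ih (by omega)
    have h3 : (s + 1 + j + 1).factorial = (s + j + 2) * (s + j + 1).factorial := by
      rw [show s + 1 + j + 1 = (s + j + 1) + 1 by ring, Nat.factorial_succ]
    calc (s + 1 + 2) * j.factorial = (s + 3) * j.factorial := by ring
      _ ≤ (s + j + 2) * ((s+2) * j.factorial) := h1
      _ < (s + j + 2) * (s + j + 1).factorial := h2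
      _ = (s + 1 + j + 1).factorial := h3.symm

private lemma aux_lt (j m : ℕ) (hm : 2 ≤ m) (h5 : 5 ≤ m + j) :
    m * Ffn j < (m + j - 1).factorial := by
  match j, h5 with
  | 0, h5 =>
    obtain ⟨s, rfl⟩ : ∃ s, m = s + 5 := ⟨m - 5, by omega⟩
    have he := fact4_expand s
    have hp := Nat.factorial_pos s
    show (s+5) * 1 < (s + 5 + 0 - 1).factorial
    have : s + 5 + 0 - 1 = s + 4 := by omega
    rw [this, he]
    have hb : (s+4)*(s+3)*(s+2)*(s+1) ≤ (s+4)*(s+3)*(s+2)*(s+1)*s.factorial := Nat.le_mul_of_pos_right _ hp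
    have h6 : 6 ≤ (s+3)*(s+2)*(s+1) := by
      calc (6:ℕ) = 3*2*1 := by norm_num
        _ ≤ (s+3)*(s+2)*(s+1) := Nat.mul_le_mul (Nat.mul_le_mul (by omega) (by omega)) (by omega)
    have hd : (s+5) * 1 < (s+4)*(s+3)*(s+2)*(s+1) := by
      calc (s+5) * 1 < 6*(s+4) := by omega
        _ ≤ ((s+3)*(s+2)*(s+1))*(s+4) := Nat.mul_le_mul_right _ h6
        _ = (s+4)*(s+3)*(s+2)*(s+1) := by ring
    exact lt_of_lt_of_le hd hb
  | 1, h5 =>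
    obtain ⟨s, rfl⟩ : ∃ s, m = s + 4 := ⟨m - 4, by omega⟩
    have he := fact4_expand s
    have hp := Nat.factorial_pos s
    show (s+4) * 1 < (s + 4 + 1 - 1).factorial
    have : s + 4 + 1 - 1 = s + 4 := by omega
    rw [this, he]
    have hb : (s+4)*(s+3)*(s+2)*(s+1) ≤ (s+4)*(s+3)*(s+2)*(s+1)*s.factorial := Nat.le_mul_of_pos_right _ hp
    have h6 : 6 ≤ (s+3)*(s+2)*(s+1) := by
      calc (6:ℕ) = 3*2*1 := by norm_num
        _ ≤ (s+3)*(s+2)*(s+1) := Nat.mul_le_mul (Nat.mul_le_mul (by omega) (by omega)) (by omega)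
    have hd : (s+4) * 1 < (s+4)*(s+3)*(s+2)*(s+1) := by
      calc (s+4) * 1 < 6*(s+4) := by omega
        _ ≤ ((s+3)*(s+2)*(s+1))*(s+4) := Nat.mul_le_mul_right _ h6
        _ = (s+4)*(s+3)*(s+2)*(s+1) := by ring
    exact lt_of_lt_of_le hd hb
  | 2, h5 =>
    obtain ⟨s, rfl⟩ : ∃ s, m = s + 3 := ⟨m - 3, by omega⟩
    have he := fact4_expand s
    have hp := Nat.factorial_pos s
    show (s+3) * 4 < (s + 3 + 2 - 1).factorial
    have : s + 3 + 2 - 1 = s + 4 := by omega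
    rw [this, he]
    have hb : (s+4)*(s+3)*(s+2)*(s+1) ≤ (s+4)*(s+3)*(s+2)*(s+1)*s.factorial := Nat.le_mul_of_pos_right _ hp
    have h6 : 8 ≤ (s+4)*(s+2)*(s+1) := by
      calc (8:ℕ) = 4*2*1 := by norm_num
        _ ≤ (s+4)*(s+2)*(s+1) := Nat.mul_le_mul (Nat.mul_le_mul (by omega) (by omega)) (by omega)
    have hd : (s+3) * 4 < (s+4)*(s+3)*(s+2)*(s+1) := by
      calc (s+3) * 4 < 8*(s+3) := by omega
        _ ≤ ((s+4)*(s+2)*(s+1))*(s+3) := Nat.mul_le_mul_right _ h6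
        _ = (s+4)*(s+3)*(s+2)*(s+1) := by ring
    exact lt_of_lt_of_le hd hb
  | 3, h5 =>
    obtain ⟨s, rfl⟩ : ∃ s, m = s + 2 := ⟨m - 2, by omega⟩
    have he := fact4_expand s
    have hp := Nat.factorial_pos s
    show (s+2) * 9 < (s + 2 + 3 - 1).factorial
    have : s + 2 + 3 - 1 = s + 4 := by omega
    rw [this, he]
    have hb : (s+4)*(s+3)*(s+2)*(s+1) ≤ (s+4)*(s+3)*(s+2)*(s+1)*s.factorial := Nat.le_mul_of_pos_right _ hp
    have h6 : 12 ≤ (s+4)*(s+3)*(s+1) := by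
      calc (12:ℕ) = 4*3*1 := by norm_num
        _ ≤ (s+4)*(s+3)*(s+1) := Nat.mul_le_mul (Nat.mul_le_mul (by omega) (by omega)) (by omega)
    have hd : (s+2) * 9 < (s+4)*(s+3)*(s+2)*(s+1) := by
      calc (s+2) * 9 < 12*(s+2) := by omega
        _ ≤ ((s+4)*(s+3)*(s+1))*(s+2) := Nat.mul_le_mul_right _ h6
        _ = (s+4)*(s+3)*(s+2)*(s+1) := by ring
    exact lt_of_lt_of_le hd hb
  | 4, h5 =>
    obtain ⟨s, rfl⟩ : ∃ s, m = s + 2 := ⟨m - 2, by omega⟩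
    have he := fact5_expand s
    have hp := Nat.factorial_pos s
    show (s+2) * 32 < (s + 2 + 4 - 1).factorial
    have : s + 2 + 4 - 1 = s + 5 := by omega
    rw [this, he]
    have hb : (s+5)*(s+4)*(s+3)*(s+2)*(s+1) ≤ (s+5)*(s+4)*(s+3)*(s+2)*(s+1)*s.factorial := Nat.le_mul_of_pos_right _ hp
    have h6 : 60 ≤ (s+5)*(s+4)*(s+3)*(s+1) := by
      calc (60:ℕ) = 5*4*3*1 := by norm_num
        _ ≤ (s+5)*(s+4)*(s+3)*(s+1) :=
            Nat.mul_le_mul (Nat.mul_le_mul (Nat.mul_le_mul (by omega) (by omega)) (by omega)) (by omega)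
    have hd : (s+2) * 32 < (s+5)*(s+4)*(s+3)*(s+2)*(s+1) := by
      calc (s+2) * 32 < 60*(s+2) := by omega
        _ ≤ ((s+5)*(s+4)*(s+3)*(s+1))*(s+2) := Nat.mul_le_mul_right _ h6
        _ = (s+5)*(s+4)*(s+3)*(s+2)*(s+1) := by ring
    exact lt_of_lt_of_le hd hb
  | (t+5), h5 =>
    obtain ⟨s, rfl⟩ : ∃ s, m = s + 2 := ⟨m - 2, by omega⟩
    have hstep := fact_step s (t+5) (by omega)
    show (s+2) * (t+5).factorial < (s + 2 + (t+5) - 1).factorial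
    have : s + 2 + (t + 5) - 1 = s + (t+5) + 1 := by omega
    rw [this]
    exact hstep

private lemma step_lt (n m : ℕ) (hn : 5 ≤ n) (hm : 2 ≤ m) (hmn : m ≤ n) :
    n * m * Ffn (n - m) < n.factorial := by
  obtain ⟨j, rfl⟩ : ∃ j, n = m + j := ⟨n - m, by omega⟩
  have hj : m + j - m = j := by omega
  rw [hj]
  have ha := aux_lt j m hm hn
  have hfs : (m + j).factorial = (m + j) * (m + j - 1).factorial := by
    obtain ⟨k, hk⟩ : ∃ k, m + j = k + 1 := ⟨m + j - 1, by omega⟩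
    rw [hk, Nat.factorial_succ, Nat.add_sub_cancel]
  calc (m + j) * m * Ffn j = (m + j) * (m * Ffn j) := by ring
    _ < (m + j) * (m + j - 1).factorial :=
        Nat.mul_lt_mul_of_le_of_lt (le_refl _) ha (by omega)
    _ = (m + j).factorial := hfs.symm

private lemma step_le (n m : ℕ) (hm : 2 ≤ m) (hmn : m ≤ n) :
    n * m * Ffn (n - m) ≤ Ffn n := by
  by_cases hn : 5 ≤ n
  · rw [Ffn_eq hn]
    exact le_of_lt (step_lt n m hn hm hmn)
  · push_neg at hn
    interval_cases n <;> interval_cases m <;> decide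

section Part2

open Equiv Subgroup

variable {α : Type}

private def permSetStab (s : Set α) : Subgroup (Equiv.Perm α) where
  carrier := {g : Equiv.Perm α | ∀ y, y ∈ s ↔ g y ∈ s}
  one_mem' := fun _ => Iff.rfl
  mul_mem' := by
    intro a b ha hb y
    exact (hb y).trans (ha (b y))
  inv_mem' := by
    intro a ha y
    have h := ha (a⁻¹ y)
    rw [show a (a⁻¹ y) = y from a.apply_symm_apply y] at h
    exact h.symm

private lemma mem_permSetStab {s : Set α} {g : Equiv.Perm α} :
    g ∈ permSetStab s ↔ ∀ y, y ∈ s ↔ g y ∈ s := Iff.rfl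

private def resHom (s : Set α) : permSetStab s →* Equiv.Perm ↥s where
  toFun g := Equiv.Perm.subtypePerm (g : Equiv.Perm α) (fun y => (g.2 y).symm)
  map_one' := rfl
  map_mul' _ _ := rfl

private lemma resHom_apply (s : Set α) (g : permSetStab s) (y : ↥s) :
    ((resHom s g y : ↥s) : α) = (g : Equiv.Perm α) y := rfl

private lemma keyA : ∀ (n : ℕ) (α : Type) [Fintype α] [DecidableEq α], Nat.card α = n →
    ∀ A : Subgroup (Equiv.Perm α), (∀ a ∈ A, ∀ b ∈ A, a * b = b * a) →
      Nat.card A * Nat.card (Subgroup.centralizer (A : Set (Equiv.Perm α))) ≤ Ffn n ∧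
      (5 ≤ n → A ≠ ⊥ →
        Nat.card A * Nat.card (Subgroup.centralizer (A : Set (Equiv.Perm α))) < n.factorial) := by
  intro n
  induction n using Nat.strong_induction_on with
  | _ n ih =>
  intro α _ _ hcard A hA
  by_cases hbot : A = ⊥
  · subst hbot
    have h2 : Subgroup.centralizer (((⊥ : Subgroup (Equiv.Perm α))) : Set (Equiv.Perm α)) = ⊤ := by
      ext g
      simp [Subgroup.mem_centralizer_iff]
    have h3 : Nat.card (Equiv.Perm α) = n.factorial := by
      rw [Nat.card_eq_fintype_card, Fintype.card_perm, ← hcard, Nat.card_eq_fintype_card]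
    refine ⟨?_, fun _ hne => absurd rfl hne⟩
    rw [Subgroup.card_bot, h2, one_mul, Subgroup.card_top, h3]
    exact fact_le_Ffn n
  · obtain ⟨σ, hσA, hσ1⟩ : ∃ σ ∈ A, σ ≠ 1 := by
      by_contra h
      push_neg at h
      exact hbot ((Subgroup.eq_bot_iff_forall A).mpr h)
    obtain ⟨x, hx⟩ : ∃ x, σ x ≠ x := by
      by_contra h
      push_neg at h
      exact hσ1 (Equiv.ext h)
    set O : Set α := MulAction.orbit (↥A) x with hO
    set m : ℕ := Nat.card ↥O with hm
    -- orbit-stabilizer for A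
    have hm_orb : m * Nat.card (MulAction.stabilizer (↥A) x) = Nat.card A := by
      have h := Nat.card_congr (MulAction.orbitProdStabilizerEquivGroup (↥A) x)
      rwa [Nat.card_prod] at h
    have hxO : x ∈ O := MulAction.mem_orbit_self x
    have hsxO : σ x ∈ O := MulAction.mem_orbit_iff.2 ⟨⟨σ, hσA⟩, rfl⟩
    have hm2 : 2 ≤ m := by
      have : Nontrivial ↥O := ⟨⟨⟨x, hxO⟩, ⟨σ x, hsxO⟩, by
        intro h
        exact hx (congrArg Subtype.val h).symm⟩⟩
      exact Finite.one_lt_card_iff_nontrivial.2 this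
    have hmn : m ≤ n := by
      rw [← hcard]
      exact Nat.card_le_card_of_injective Subtype.val Subtype.val_injective
    -- membership facts
    have horb : ∀ a ∈ A, ∀ y, y ∈ O ↔ a y ∈ O := by
      intro a ha
      have fwd : ∀ b ∈ A, ∀ y, y ∈ O → b y ∈ O := by
        intro b hb y hy
        obtain ⟨c, hc⟩ := hy
        refine ⟨⟨b, hb⟩ * c, ?_⟩
        have hc' : (c : Equiv.Perm α) x = y := hc
        show ((⟨b, hb⟩ * c : ↥A) : Equiv.Perm α) x = b y
        rw [Subgroup.coe_mul]
        show b ((c : Equiv.Perm α) x) = b y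
        rw [hc']
      intro y
      constructor
      · exact fwd a ha y
      · intro hy
        have := fwd a⁻¹ (inv_mem ha) (a y) hy
        simpa using this
    have hfixO : ∀ c : Equiv.Perm α, (∀ a ∈ A, a * c = c * a) → c x = x →
        ∀ y ∈ O, c y = y := by
      intro c hc hcx y hy
      obtain ⟨b, hb⟩ := hy
      have hbx : ((b : Equiv.Perm α)) x = y := hb
      have hcomm : (b : Equiv.Perm α) * c = c * (b : Equiv.Perm α) := hc _ b.2
      calc c y = c ((b : Equiv.Perm α) x) := by rw [hbx]
        _ = ((c * (b : Equiv.Perm α))) x := rfl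
        _ = (((b : Equiv.Perm α) * c)) x := by rw [hcomm]
        _ = (b : Equiv.Perm α) (c x) := rfl
        _ = (b : Equiv.Perm α) x := by rw [hcx]
        _ = y := hbx
    have hmemS_of_fix : ∀ c : Equiv.Perm α, (∀ y ∈ O, c y = y) → c ∈ permSetStab Oᶜ := by
      intro c hcfix
      rw [mem_permSetStab]
      intro y
      simp only [Set.mem_compl_iff]
      constructor
      · intro hy hcy
        have h1 : c (c y) = c y := hcfix _ hcy
        exact hy (by rw [← c.injective h1]; exact hcy)
      · intro hy hyO
        exact hy (by rw [hcfix y hyO]; exact hyO)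
    have hmemS_of_A : ∀ a, a ∈ A → a ∈ permSetStab Oᶜ := by
      intro a ha
      rw [mem_permSetStab]
      intro y
      simp only [Set.mem_compl_iff, not_iff_not]
      exact horb a ha y
    set S := permSetStab Oᶜ with hS
    set res := resHom Oᶜ with hres
    set B : Subgroup (Equiv.Perm ↥(Oᶜ)) := Subgroup.map res (A.subgroupOf S) with hB
    have hB_comm : ∀ b ∈ B, ∀ b' ∈ B, b * b' = b' * b := by
      intro b hb b' hb'
      obtain ⟨a, ha, rfl⟩ := hb
      obtain ⟨a', ha', rfl⟩ := hb'
      rw [← map_mul, ← map_mul]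
      congr 1
      exact Subtype.ext (hA _ (Subgroup.mem_subgroupOf.1 ha) _ (Subgroup.mem_subgroupOf.1 ha'))
    -- injection from stabilizer of A into B
    have hstabA_fix : ∀ (a : MulAction.stabilizer (↥A) x), ∀ y ∈ O,
        (((a : ↥A) : Equiv.Perm α)) y = y := by
      intro a y hy
      refine hfixO _ (fun b hb => hA _ hb _ (a : ↥A).2) ?_ y hy
      exact a.2
    have hstabA_le : Nat.card (MulAction.stabilizer (↥A) x) ≤ Nat.card B := by
      have hmem : ∀ (a : MulAction.stabilizer (↥A) x),
          res ⟨_, hmemS_of_fix _ (hstabA_fix a)⟩ ∈ B := by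
        intro a
        exact Subgroup.mem_map.2 ⟨⟨_, hmemS_of_fix _ (hstabA_fix a)⟩,
          Subgroup.mem_subgroupOf.2 (a : ↥A).2, rfl⟩
      refine Nat.card_le_card_of_injective
        (fun a => (⟨res ⟨_, hmemS_of_fix _ (hstabA_fix a)⟩, hmem a⟩ : ↥B)) ?_
      intro a₁ a₂ h
      have h1 : ∀ y : ↥(Oᶜ), ((a₁ : ↥A) : Equiv.Perm α) ↑y = ((a₂ : ↥A) : Equiv.Perm α) ↑y := by
        intro y
        have := congrArg Subtype.val h
        have h2 := congrFun (congrArg (fun (e : Equiv.Perm ↥(Oᶜ)) => (e : ↥(Oᶜ) → ↥(Oᶜ))) this) y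
        exact congrArg Subtype.val h2
      have hperm : ((a₁ : ↥A) : Equiv.Perm α) = ((a₂ : ↥A) : Equiv.Perm α) := by
        ext y
        by_cases hy : y ∈ O
        · rw [hstabA_fix a₁ y hy, hstabA_fix a₂ y hy]
        · exact h1 ⟨y, hy⟩
      exact Subtype.ext (Subtype.ext hperm)
    have hcardA : Nat.card A ≤ m * Nat.card B := by
      rw [← hm_orb]
      exact Nat.mul_le_mul_left m hstabA_le
    -- centralizer side
    set C := Subgroup.centralizer (A : Set (Equiv.Perm α)) with hC
    have hC_orb : Nat.card C = Nat.card ↥(MulAction.orbit (↥C) x) *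
        Nat.card (MulAction.stabilizer (↥C) x) := by
      have h := Nat.card_congr (MulAction.orbitProdStabilizerEquivGroup (↥C) x)
      rw [Nat.card_prod] at h
      exact h.symm
    have hC_orb_le : Nat.card ↥(MulAction.orbit (↥C) x) ≤ n := by
      rw [← hcard]
      exact Nat.card_le_card_of_injective Subtype.val Subtype.val_injective
    have hstabC_fix : ∀ (c : MulAction.stabilizer (↥C) x), ∀ y ∈ O,
        (((c : ↥C) : Equiv.Perm α)) y = y := by
      intro c y hy
      refine hfixO _ ?_ c.2 y hy
      intro a ha
      exact Subgroup.mem_centralizer_iff.1 (c : ↥C).2 a ha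
    set CB := Subgroup.centralizer (B : Set (Equiv.Perm ↥(Oᶜ))) with hCB
    have hstabC_le : Nat.card (MulAction.stabilizer (↥C) x) ≤ Nat.card CB := by
      have hmem : ∀ (c : MulAction.stabilizer (↥C) x),
          res ⟨_, hmemS_of_fix _ (hstabC_fix c)⟩ ∈ CB := by
        intro c
        rw [hCB]
        refine Subgroup.mem_centralizer_iff.2 ?_
        intro b hb
        obtain ⟨a, ha, rfl⟩ := hb
        rw [← map_mul, ← map_mul]
        congr 1
        refine Subtype.ext ?_
        have haA : (a : Equiv.Perm α) ∈ A := Subgroup.mem_subgroupOf.1 ha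
        exact Subgroup.mem_centralizer_iff.1 (c : ↥C).2 _ haA
      refine Nat.card_le_card_of_injective
        (fun c => (⟨res ⟨_, hmemS_of_fix _ (hstabC_fix c)⟩, hmem c⟩ : ↥CB)) ?_
      intro c₁ c₂ h
      have h1 : ∀ y : ↥(Oᶜ), ((c₁ : ↥C) : Equiv.Perm α) ↑y = ((c₂ : ↥C) : Equiv.Perm α) ↑y := by
        intro y
        have := congrArg Subtype.val h
        have h2 := congrFun (congrArg (fun (e : Equiv.Perm ↥(Oᶜ)) => (e : ↥(Oᶜ) → ↥(Oᶜ))) this) y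
        exact congrArg Subtype.val h2
      have hperm : ((c₁ : ↥C) : Equiv.Perm α) = ((c₂ : ↥C) : Equiv.Perm α) := by
        ext y
        by_cases hy : y ∈ O
        · rw [hstabC_fix c₁ y hy, hstabC_fix c₂ y hy]
        · exact h1 ⟨y, hy⟩
      exact Subtype.ext (Subtype.ext hperm)
    have hcardC : Nat.card C ≤ n * Nat.card CB := by
      rw [hC_orb]
      exact Nat.mul_le_mul hC_orb_le hstabC_le
    -- induction hypothesis
    haveI : Fintype ↥(Oᶜ) := Fintype.ofFinite _
    have hcard' : Nat.card ↥(Oᶜ) = n - m := by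
      have h1 := Set.ncard_add_ncard_compl O
      rw [Nat.card_coe_set_eq]
      have h2 : O.ncard = m := (Nat.card_coe_set_eq O).symm
      rw [hcard] at h1
      omega
    have hlt : n - m < n := by omega
    have IH := (ih (n - m) hlt ↥(Oᶜ) hcard' B hB_comm).1
    -- combine
    have main : Nat.card A * Nat.card C ≤ n * m * Ffn (n - m) := by
      calc Nat.card A * Nat.card C ≤ (m * Nat.card B) * (n * Nat.card CB) :=
            Nat.mul_le_mul hcardA hcardC
        _ = n * m * (Nat.card B * Nat.card CB) := by ring
        _ ≤ n * m * Ffn (n - m) := Nat.mul_le_mul_left _ IH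
    exact ⟨le_trans main (step_le n m hm2 hmn),
      fun h5 _ => lt_of_le_of_lt main (step_lt n m h5 hm2 hmn)⟩

end Part2
section Part3

open Subgroup

variable {G : Type*} [Group G] [Finite G]
set_option linter.unusedSectionVars false

private def psiHom (H : Subgroup G) : (↥H × ↥(Subgroup.centralizer (H : Set G))) →* G :=
  MonoidHom.mk' (fun p => (p.1 : G) * (p.2 : G)) (by
    rintro ⟨h₁, c₁⟩ ⟨h₂, c₂⟩
    simp only [Prod.mk_mul_mk, Subgroup.coe_mul]
    have hcomm : (h₂ : G) * (c₁ : G) = (c₁ : G) * (h₂ : G) :=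
      Subgroup.mem_centralizer_iff.1 c₁.2 _ h₂.2
    calc (h₁ : G) * h₂ * ((c₁ : G) * c₂) = (h₁ : G) * ((h₂ : G) * c₁) * c₂ := by
          simp [mul_assoc]
      _ = (h₁ : G) * ((c₁ : G) * h₂) * c₂ := by rw [hcomm]
      _ = (h₁ : G) * c₁ * ((h₂ : G) * c₂) := by simp [mul_assoc])

private lemma psi_card (H : Subgroup G) :
    Nat.card H * Nat.card (Subgroup.centralizer (H : Set G)) =
      Nat.card (psiHom H).range * Nat.card (psiHom H).ker := by
  have h1 := Subgroup.card_eq_card_quotient_mul_card_subgroup (psiHom H).ker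
  have h2 : Nat.card ((↥H × ↥(Subgroup.centralizer (H : Set G))) ⧸ (psiHom H).ker) =
      Nat.card (psiHom H).range :=
    Nat.card_congr (QuotientGroup.quotientKerEquivRange (psiHom H)).toEquiv
  rw [← Nat.card_prod, h1, h2]

private lemma psi_ker_le (H : Subgroup G) :
    Nat.card (psiHom H).ker ≤
      Nat.card (H ⊓ Subgroup.centralizer (H : Set G) : Subgroup G) := by
  have hmem : ∀ p : (psiHom H).ker, ((p : ↥H × ↥(Subgroup.centralizer (H : Set G))).1 : G) ∈
      H ⊓ Subgroup.centralizer (H : Set G) := by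
    rintro ⟨⟨h, c⟩, hp⟩
    have hp' : (h : G) * (c : G) = 1 := hp
    have hinv : (h : G) = (c : G)⁻¹ := eq_inv_of_mul_eq_one_left hp'
    refine Subgroup.mem_inf.2 ⟨h.2, ?_⟩
    rw [hinv]
    exact inv_mem c.2
  refine Nat.card_le_card_of_injective
    (fun p => ⟨_, hmem p⟩) ?_
  rintro ⟨⟨h₁, c₁⟩, hp₁⟩ ⟨⟨h₂, c₂⟩, hp₂⟩ h
  have h1 : (h₁ : G) = (h₂ : G) := by simpa using Subtype.ext_iff.1 h
  have hp₁' : (h₁ : G) * (c₁ : G) = 1 := hp₁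
  have hp₂' : (h₂ : G) * (c₂ : G) = 1 := hp₂
  have h2 : (c₁ : G) = (c₂ : G) := by
    have e1 : (c₁ : G) = (h₁ : G)⁻¹ := eq_inv_of_mul_eq_one_right hp₁'
    have e2 : (c₂ : G) = (h₂ : G)⁻¹ := eq_inv_of_mul_eq_one_right hp₂'
    rw [e1, e2, h1]
  exact Subtype.ext (Prod.ext (Subtype.ext h1) (Subtype.ext h2))

private lemma psi_range_le (H : Subgroup G) :
    (psiHom H).range ≤
      Subgroup.centralizer ((H ⊓ Subgroup.centralizer (H : Set G) : Subgroup G) : Set G) := by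
  rintro g ⟨⟨h, c⟩, rfl⟩
  refine Subgroup.mem_centralizer_iff.2 ?_
  intro z hz
  have hzH : z ∈ H := (Subgroup.mem_inf.1 hz).1
  have hzC : z ∈ Subgroup.centralizer (H : Set G) := (Subgroup.mem_inf.1 hz).2
  have h1 : (h : G) * z = z * (h : G) := Subgroup.mem_centralizer_iff.1 hzC _ h.2
  have h2 : z * (c : G) = (c : G) * z := Subgroup.mem_centralizer_iff.1 c.2 z hzH
  show z * ((h : G) * c) = ((h : G) * c) * z
  calc z * ((h : G) * c) = (z * h) * c := by rw [mul_assoc]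
    _ = ((h : G) * z) * c := by rw [h1]
    _ = (h : G) * (z * c) := by rw [mul_assoc]
    _ = (h : G) * ((c : G) * z) := by rw [h2]
    _ = ((h : G) * c) * z := by rw [mul_assoc]

private lemma measure_le_inf (H : Subgroup G) :
    Nat.card H * Nat.card (Subgroup.centralizer (H : Set G)) ≤
      Nat.card (H ⊓ Subgroup.centralizer (H : Set G) : Subgroup G) *
        Nat.card (Subgroup.centralizer
          ((H ⊓ Subgroup.centralizer (H : Set G) : Subgroup G) : Set G)) := by
  rw [psi_card H, Nat.mul_comm]
  exact Nat.mul_le_mul (psi_ker_le H) (Subgroup.card_le_of_le (psi_range_le H))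

end Part3
section Part4

open Equiv

variable {α : Type} [DecidableEq α]
set_option linter.unusedSectionVars false

private lemma exists_perm2 (a b x z : α) (hab : a ≠ b) (hxz : x ≠ z) :
    ∃ g : Equiv.Perm α, g a = x ∧ g b = z := by
  refine ⟨Equiv.swap (Equiv.swap a x b) z * Equiv.swap a x, ?_, ?_⟩
  · show Equiv.swap (Equiv.swap a x b) z (Equiv.swap a x a) = x
    rw [Equiv.swap_apply_left]
    have h1 : x ≠ Equiv.swap a x b := fun h =>
      hab ((Equiv.swap a x).injective ((Equiv.swap_apply_left a x).trans h))
    exact Equiv.swap_apply_of_ne_of_ne h1 hxz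
  · show Equiv.swap (Equiv.swap a x b) z (Equiv.swap a x b) = z
    exact Equiv.swap_apply_left _ _

private lemma exists_perm3 (a b p x z y : α) (hab : a ≠ b) (hap : a ≠ p) (hbp : b ≠ p)
    (hxz : x ≠ z) (hxy : x ≠ y) (hzy : z ≠ y) :
    ∃ g : Equiv.Perm α, g a = x ∧ g b = z ∧ g p = y := by
  obtain ⟨g', hg'a, hg'b⟩ := exists_perm2 a b x z hab hxz
  refine ⟨Equiv.swap (g' p) y * g', ?_, ?_, ?_⟩
  · show Equiv.swap (g' p) y (g' a) = x
    rw [hg'a]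
    refine Equiv.swap_apply_of_ne_of_ne ?_ hxy
    rw [← hg'a]
    exact fun h => hap (g'.injective h)
  · show Equiv.swap (g' p) y (g' b) = z
    rw [hg'b]
    refine Equiv.swap_apply_of_ne_of_ne ?_ hzy
    rw [← hg'b]
    exact fun h => hbp (g'.injective h)
  · show Equiv.swap (g' p) y (g' p) = y
    exact Equiv.swap_apply_left _ _

private lemma exists_perm4 (a b p q x z y w : α) (hab : a ≠ b) (hap : a ≠ p) (hbp : b ≠ p)
    (haq : a ≠ q) (hbq : b ≠ q) (hpq : p ≠ q)
    (hxz : x ≠ z) (hxy : x ≠ y) (hzy : z ≠ y) (hxw : x ≠ w) (hzw : z ≠ w) (hyw : y ≠ w) :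
    ∃ g : Equiv.Perm α, g a = x ∧ g b = z ∧ g p = y ∧ g q = w := by
  obtain ⟨g', hg'a, hg'b, hg'p⟩ := exists_perm3 a b p x z y hab hap hbp hxz hxy hzy
  refine ⟨Equiv.swap (g' q) w * g', ?_, ?_, ?_, ?_⟩
  · show Equiv.swap (g' q) w (g' a) = x
    rw [hg'a]
    refine Equiv.swap_apply_of_ne_of_ne ?_ hxw
    rw [← hg'a]
    exact fun h => haq (g'.injective h)
  · show Equiv.swap (g' q) w (g' b) = z
    rw [hg'b]
    refine Equiv.swap_apply_of_ne_of_ne ?_ hzw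
    rw [← hg'b]
    exact fun h => hbq (g'.injective h)
  · show Equiv.swap (g' q) w (g' p) = y
    rw [hg'p]
    refine Equiv.swap_apply_of_ne_of_ne ?_ hyw
    rw [← hg'p]
    exact fun h => hpq (g'.injective h)
  · show Equiv.swap (g' q) w (g' q) = w
    exact Equiv.swap_apply_left _ _

private lemma exists_notin [Fintype α] (s : Finset α) (h : s.card < Fintype.card α) :
    ∃ z, z ∉ s := by
  by_contra hc
  push_neg at hc
  have hsub : (Finset.univ : Finset α) ⊆ s := fun z _ => hc z
  have := Finset.card_le_card hsub
  rw [Finset.card_univ] at this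
  omega

private lemma conj_eval {c σ : Equiv.Perm α} (g : Equiv.Perm α)
    (h : (g * c * g⁻¹) * σ = σ * (g * c * g⁻¹)) (t : α) :
    g (c (g⁻¹ (σ t))) = σ (g (c (g⁻¹ t))) := by
  have := congrArg (fun (e : Equiv.Perm α) => e t) h
  simpa [Equiv.Perm.mul_apply] using this

private lemma lemX_fp [Fintype α] (h3 : 3 ≤ Fintype.card α)
    {c σ : Equiv.Perm α} (hσ1 : σ ≠ 1) (p : α) (hpfix : c p = p) (a : α) (ha : c a ≠ a)
    (hcomm : ∀ g : Equiv.Perm α, (g * c * g⁻¹) * σ = σ * (g * c * g⁻¹)) : False := by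
  obtain ⟨x, hx⟩ : ∃ x, σ x ≠ x := by
    by_contra h
    push_neg at h
    exact hσ1 (Equiv.ext h)
  have hab : a ≠ c a := fun h => ha h.symm
  have hpa : p ≠ a := fun h => ha (by rw [← h, hpfix])
  have hpb : p ≠ c a := by
    intro h
    have h1 : c (c a) = c a := by rw [← h, hpfix]
    exact ha (c.injective h1)
  obtain ⟨z, hz⟩ := exists_notin ({x, σ x} : Finset α)
    (lt_of_le_of_lt (Finset.card_insert_le _ _) (by simp; omega))
  simp only [Finset.mem_insert, Finset.mem_singleton, not_or] at hz
  obtain ⟨hzx, hzy⟩ := hz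
  obtain ⟨g, hga, hgb, hgp⟩ := exists_perm3 a (c a) p x z (σ x) hab (Ne.symm hpa) (Ne.symm hpb)
    (Ne.symm hzx) (Ne.symm hx) hzy
  have heval := conj_eval g (hcomm g) x
  have hq1 : g⁻¹ (σ x) = p := by rw [← hgp]; simp
  have hq2 : g⁻¹ x = a := by rw [← hga]; simp
  rw [hq1, hq2, hpfix, hgp, hgb] at heval
  exact hzx (σ.injective heval).symm

private lemma lemX [Fintype α] (h5 : 5 ≤ Fintype.card α)
    (c σ : Equiv.Perm α) (hc1 : c ≠ 1) (hσ1 : σ ≠ 1)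
    (hcomm : ∀ g : Equiv.Perm α, (g * c * g⁻¹) * σ = σ * (g * c * g⁻¹))
    (hcomm2 : ∀ g : Equiv.Perm α, (g * σ * g⁻¹) * c = c * (g * σ * g⁻¹)) : False := by
  obtain ⟨a, ha⟩ : ∃ a, c a ≠ a := by
    by_contra h
    push_neg at h
    exact hc1 (Equiv.ext h)
  obtain ⟨x0, hx0⟩ : ∃ x, σ x ≠ x := by
    by_contra h
    push_neg at h
    exact hσ1 (Equiv.ext h)
  by_cases hfc : ∃ p, c p = p
  · obtain ⟨p, hp⟩ := hfc
    exact lemX_fp (by omega) hσ1 p hp a ha hcomm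
  by_cases hfσ : ∃ p, σ p = p
  · obtain ⟨p, hp⟩ := hfσ
    exact lemX_fp (by omega) hc1 p hp x0 hx0 hcomm2
  push_neg at hfc hfσ
  have hab : a ≠ c a := fun h => ha h.symm
  have hxy : a ≠ σ a := fun h => hfσ a h.symm
  obtain ⟨p, hp⟩ := exists_notin ({a, c a} : Finset α)
    (lt_of_le_of_lt (Finset.card_insert_le _ _) (by simp; omega))
  simp only [Finset.mem_insert, Finset.mem_singleton, not_or] at hp
  obtain ⟨hpa, hpb⟩ := hp
  have hqp : c p ≠ p := hfc p
  have hqb : c p ≠ c a := fun h => hpa (c.injective h)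
  by_cases hqa : c p = a
  · obtain ⟨z, hz⟩ := exists_notin ({a, σ a, σ⁻¹ a} : Finset α)
      (lt_of_le_of_lt (le_trans (Finset.card_insert_le _ _)
        (Nat.add_le_add_right (Finset.card_insert_le _ _) 1)) (by simp; omega))
    simp only [Finset.mem_insert, Finset.mem_singleton, not_or] at hz
    obtain ⟨hza, hzy, hzs⟩ := hz
    obtain ⟨g, hga, hgb, hgp⟩ := exists_perm3 a (c a) p a z (σ a)
      hab (Ne.symm hpa) (Ne.symm hpb) (Ne.symm hza) hxy hzy
    have heval := conj_eval g (hcomm g) a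
    have hq1 : g⁻¹ (σ a) = p := by rw [← hgp]; simp
    have hq2 : g⁻¹ a = a := g.injective (by rw [show g (g⁻¹ a) = a from g.apply_symm_apply a, hga])
    rw [hq1, hq2, hqa, hga, hgb] at heval
    -- heval : a = σ z
    exact hzs (by rw [heval]; simp)
  · obtain ⟨z, hz⟩ := exists_notin ({a, σ a} : Finset α)
      (lt_of_le_of_lt (Finset.card_insert_le _ _) (by simp; omega))
    simp only [Finset.mem_insert, Finset.mem_singleton, not_or] at hz
    obtain ⟨hza, hzy⟩ := hz
    obtain ⟨w, hw⟩ := exists_notin ({a, σ a, z, σ z} : Finset α)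
      (lt_of_le_of_lt (le_trans (Finset.card_insert_le _ _)
        (Nat.add_le_add_right (le_trans (Finset.card_insert_le _ _)
          (Nat.add_le_add_right (Finset.card_insert_le _ _) 1)) 1)) (by simp; omega))
    simp only [Finset.mem_insert, Finset.mem_singleton, not_or] at hw
    obtain ⟨hwa, hwy, hwz, hws⟩ := hw
    obtain ⟨g, hga, hgb, hgp, hgq⟩ := exists_perm4 a (c a) p (c p) a z (σ a) w
      hab (Ne.symm hpa) (Ne.symm hpb) (Ne.symm hqa) (Ne.symm hqb) (Ne.symm hqp)
      (Ne.symm hza) hxy hzy (Ne.symm hwa) (Ne.symm hwz) (Ne.symm hwy)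
    have heval := conj_eval g (hcomm g) a
    have hq1 : g⁻¹ (σ a) = p := by rw [← hgp]; simp
    have hq2 : g⁻¹ a = a := g.injective (by rw [show g (g⁻¹ a) = a from g.apply_symm_apply a, hga])
    rw [hq1, hq2, hgq, hgb] at heval
    exact hws heval

end Part4

/-- The Chermak-Delgado measure of a subgroup `H` of `G`: `|H| * |C_G(H)|`. -/
noncomputable def cdMeasure {G : Type*} [Group G] (H : Subgroup G) : ℕ :=
  Nat.card H * Nat.card (Subgroup.centralizer (H : Set G))

/-- The Chermak-Delgado lattice: subgroups of maximal Chermak-Delgado measure. -/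
def CD (G : Type*) [Group G] : Set (Subgroup G) :=
  {H : Subgroup G | ∀ K : Subgroup G, cdMeasure K ≤ cdMeasure H}

theorem stmt_12 (n : ℕ) (hn : 5 ≤ n) :
    CD (Equiv.Perm (Fin n)) = {(⊥ : Subgroup (Equiv.Perm (Fin n))), ⊤} := by
  classical
  have hcardG : Nat.card (Equiv.Perm (Fin n)) = n.factorial := by
    rw [Nat.card_eq_fintype_card, Fintype.card_perm, Fintype.card_fin]
  have hcardFin : Nat.card (Fin n) = n := by simp
  -- upper bound for all subgroups
  have hub : ∀ K : Subgroup (Equiv.Perm (Fin n)), cdMeasure K ≤ n.factorial := by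
    intro K
    have hZcomm : ∀ a ∈ K ⊓ Subgroup.centralizer (K : Set (Equiv.Perm (Fin n))),
        ∀ b ∈ K ⊓ Subgroup.centralizer (K : Set (Equiv.Perm (Fin n))), a * b = b * a := by
      intro a ha b hb
      exact Subgroup.mem_centralizer_iff.1 (Subgroup.mem_inf.1 hb).2 a (Subgroup.mem_inf.1 ha).1
    have h1 := measure_le_inf K
    have h2 := (keyA n (Fin n) hcardFin _ hZcomm).1
    rw [Ffn_eq hn] at h2
    exact le_trans h1 h2
  have hcentbot : Subgroup.centralizer
      (((⊥ : Subgroup (Equiv.Perm (Fin n)))) : Set (Equiv.Perm (Fin n))) = ⊤ := by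
    ext g
    simp [Subgroup.mem_centralizer_iff]
  have hbot_eq : cdMeasure (⊥ : Subgroup (Equiv.Perm (Fin n))) = n.factorial := by
    unfold cdMeasure
    rw [Subgroup.card_bot, one_mul, hcentbot, Subgroup.card_top, hcardG]
  have hbot_mem : (⊥ : Subgroup (Equiv.Perm (Fin n))) ∈ CD (Equiv.Perm (Fin n)) := by
    intro K
    rw [hbot_eq]
    exact hub K
  have htop_mem : (⊤ : Subgroup (Equiv.Perm (Fin n))) ∈ CD (Equiv.Perm (Fin n)) := by
    intro K
    have h1 : n.factorial ≤ cdMeasure (⊤ : Subgroup (Equiv.Perm (Fin n))) := by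
      unfold cdMeasure
      rw [Subgroup.card_top, hcardG]
      exact Nat.le_mul_of_pos_right _ Nat.card_pos
    exact le_trans (hub K) h1
  ext H
  simp only [Set.mem_insert_iff, Set.mem_singleton_iff]
  constructor
  · intro hH
    have hHeq : cdMeasure H = n.factorial := le_antisymm (hub H) (by
      have := hH ⊥
      rwa [hbot_eq] at this)
    by_cases hHbot : H = ⊥
    · exact Or.inl hHbot
    right
    have hZbot : H ⊓ (Subgroup.centralizer (H : Set (Equiv.Perm (Fin n)))) = ⊥ := by
      by_contra hZne
      have hZcomm : ∀ a ∈ H ⊓ (Subgroup.centralizer (H : Set (Equiv.Perm (Fin n)))), ∀ b ∈ H ⊓ (Subgroup.centralizer (H : Set (Equiv.Perm (Fin n)))), a * b = b * a := by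
        intro a ha b hb
        exact Subgroup.mem_centralizer_iff.1 (Subgroup.mem_inf.1 hb).2 a (Subgroup.mem_inf.1 ha).1
      have hlt := (keyA n (Fin n) hcardFin _ hZcomm).2 hn hZne
      have h1 := measure_le_inf H
      unfold cdMeasure at hHeq
      omega
    -- the range of psiHom H is everything
    have hkerone : Nat.card (psiHom H).ker = 1 := by
      have h1 := psi_ker_le H
      rw [hZbot, Subgroup.card_bot] at h1
      have h2 : 0 < Nat.card (psiHom H).ker := Nat.card_pos
      omega
    have hrange_card : Nat.card (psiHom H).range = Nat.card (Equiv.Perm (Fin n)) := by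
      have h1 := psi_card H
      unfold cdMeasure at hHeq
      rw [hkerone, mul_one] at h1
      rw [← h1, hHeq, hcardG]
    have hrange_top : (psiHom H).range = ⊤ := Subgroup.eq_top_of_card_eq _ hrange_card
    have hdecomp : ∀ g : Equiv.Perm (Fin n), ∃ h ∈ H, ∃ k ∈ (Subgroup.centralizer (H : Set (Equiv.Perm (Fin n)))), g = h * k := by
      intro g
      have hmem : g ∈ (psiHom H).range := hrange_top ▸ Subgroup.mem_top g
      obtain ⟨⟨h, k⟩, hk⟩ := hmem
      exact ⟨h, h.2, k, k.2, hk.symm⟩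
    -- (Subgroup.centralizer (H : Set (Equiv.Perm (Fin n)))) must be trivial
    have hCbot : (Subgroup.centralizer (H : Set (Equiv.Perm (Fin n)))) = ⊥ := by
      by_contra hCne
      obtain ⟨σ, hσH, hσ1⟩ : ∃ σ ∈ H, σ ≠ 1 := by
        by_contra h
        push_neg at h
        exact hHbot ((Subgroup.eq_bot_iff_forall H).mpr h)
      obtain ⟨c, hcC, hc1⟩ : ∃ c ∈ (Subgroup.centralizer (H : Set (Equiv.Perm (Fin n)))), c ≠ 1 := by
        by_contra h
        push_neg at h
        exact hCne ((Subgroup.eq_bot_iff_forall (Subgroup.centralizer (H : Set (Equiv.Perm (Fin n))))).mpr h)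
      have hcomm1 : ∀ g : Equiv.Perm (Fin n), (g * σ * g⁻¹) * c = c * (g * σ * g⁻¹) := by
        intro g
        obtain ⟨h, hh, k, hkC, rfl⟩ := hdecomp g
        have hkσ : σ * k = k * σ := Subgroup.mem_centralizer_iff.1 hkC σ hσH
        have hconj : (h * k) * σ * (h * k)⁻¹ = h * σ * h⁻¹ := by
          rw [mul_inv_rev]
          calc h * k * σ * (k⁻¹ * h⁻¹) = h * (k * σ * k⁻¹) * h⁻¹ := by
                simp [mul_assoc]
            _ = h * σ * h⁻¹ := by rw [← hkσ]; simp [mul_assoc]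
        rw [hconj]
        have hmem : h * σ * h⁻¹ ∈ H := H.mul_mem (H.mul_mem hh hσH) (H.inv_mem hh)
        exact Subgroup.mem_centralizer_iff.1 hcC _ hmem
      have hcomm2 : ∀ g : Equiv.Perm (Fin n), (g * c * g⁻¹) * σ = σ * (g * c * g⁻¹) := by
        intro g
        obtain ⟨h, hh, k, hkC, rfl⟩ := hdecomp g
        have hk1 : k * c * k⁻¹ ∈ (Subgroup.centralizer (H : Set (Equiv.Perm (Fin n)))) := (Subgroup.centralizer (H : Set (Equiv.Perm (Fin n)))).mul_mem ((Subgroup.centralizer (H : Set (Equiv.Perm (Fin n)))).mul_mem hkC hcC) ((Subgroup.centralizer (H : Set (Equiv.Perm (Fin n)))).inv_mem hkC)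
        have hh1 : h * (k * c * k⁻¹) = (k * c * k⁻¹) * h :=
          Subgroup.mem_centralizer_iff.1 hk1 h hh
        have hconj : (h * k) * c * (h * k)⁻¹ = k * c * k⁻¹ := by
          rw [mul_inv_rev]
          calc h * k * c * (k⁻¹ * h⁻¹) = h * (k * c * k⁻¹) * h⁻¹ := by
                simp [mul_assoc]
            _ = (k * c * k⁻¹) * h * h⁻¹ := by rw [hh1]
            _ = k * c * k⁻¹ := by simp
        rw [hconj]
        exact (Subgroup.mem_centralizer_iff.1 hk1 σ hσH).symm
      have h5 : 5 ≤ Fintype.card (Fin n) := by rw [Fintype.card_fin]; exact hn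
      exact lemX h5 c σ hc1 hσ1 hcomm2 hcomm1
    -- conclude H = ⊤
    have hcardH : Nat.card H = Nat.card (Equiv.Perm (Fin n)) := by
      unfold cdMeasure at hHeq
      rw [hCbot, Subgroup.card_bot, mul_one] at hHeq
      rw [hHeq, hcardG]
    exact Subgroup.eq_top_of_card_eq H hcardH
  · intro h
    rcases h with rfl | rfl
    · exact hbot_mem
    · exact htop_mem
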